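/- Let α ∈ ℤ^{m|n} be antidominant. Then for every x ∈ ℤ: φ_x(α) = α_0(x) + max(α_1(x+1) − α_0(x+1), 0) and ε_x(α) = α_1(x) + max(α_0(x+1) − α_1(x+1), 0). (This is the explicit computation of reduced signatures of antidominant tuples used in the proof of Lemma 4.4.) -/

import Mathlib

/-- A symbol of an `i`-signature: `+`, `-`, or `0`. -/
inductive Sign : Type
  | plus : Sign
  | minus : Sign
  | zero : Sign
  deriving DecidableEq, Repr

/-- If the list starts with `0* +`, replace that `+` by `0` (else `none`). -/
def eatPlus : List Sign → Option (List Sign)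
  | [] => none
  | Sign.plus :: rest => some (Sign.zero :: rest)
  | Sign.zero :: rest => (eatPlus rest).map (Sign.zero :: ·)
  | Sign.minus :: _ => none

/-- Cancel the leftmost pattern `- 0* +` (replacing both symbols by `0`), if any. -/
def cancelOne : List Sign → Option (List Sign)
  | [] => none
  | Sign.minus :: rest =>
    match eatPlus rest with
    | some rest' => some (Sign.zero :: rest')
    | none => (cancelOne rest).map (Sign.minus :: ·)
  | s :: rest => (cancelOne rest).map (s :: ·)

/-- Iterate cancellation at most `k` times. -/
def reduceIter : ℕ → List Sign → List Sign
  | 0, l => l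
  | k + 1, l =>
    match cancelOne l with
    | none => l
    | some l' => reduceIter k l'

/-- The reduced signature: cancel `- 0* +` patterns until none remains
(`l.length` iterations always suffice). -/
def reduceSig (l : List Sign) : List Sign := reduceIter l.length l

/-- The `i`-signature symbol of `α ∈ ℤ^{m|n}` at position `j` (0-indexed;
positions `j < m` are left of the separator). -/
def signOf (m n : ℕ) (i : ℤ) (α : Fin (m + n) → ℤ) (j : Fin (m + n)) : Sign :=
  if (j : ℕ) < m then
    if α j = i then Sign.plus else if α j = i + 1 then Sign.minus else Sign.zero
  else
    if α j = i + 1 then Sign.plus else if α j = i then Sign.minus else Sign.zero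

/-- The `i`-signature of `α` as a list of length `m + n`. -/
def sigList (m n : ℕ) (i : ℤ) (α : Fin (m + n) → ℤ) : List Sign :=
  List.ofFn (signOf m n i α)

/-- The reduced `i`-signature of `α`. -/
def redSig (m n : ℕ) (i : ℤ) (α : Fin (m + n) → ℤ) : List Sign :=
  reduceSig (sigList m n i α)

/-- `ε_i(α)`: the number of `-` in the reduced `i`-signature. -/
def epsilonNum (m n : ℕ) (i : ℤ) (α : Fin (m + n) → ℤ) : ℕ :=
  (redSig m n i α).count Sign.minus

/-- `φ_i(α)`: the number of `+` in the reduced `i`-signature. -/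
def phiNum (m n : ℕ) (i : ℤ) (α : Fin (m + n) → ℤ) : ℕ :=
  (redSig m n i α).count Sign.plus

/-- `c_j ∈ ℤ^{m|n}`: `+1` at position `j` if `j` is left of the separator,
`-1` at position `j` otherwise, and `0` elsewhere (0-indexed). -/
def cvec (m n : ℕ) (j : ℕ) : Fin (m + n) → ℤ :=
  fun k => if (k : ℕ) = j then (if j < m then 1 else -1) else 0

/-- The index of the last occurrence of `s` in `l` (junk if `s ∉ l`). -/
def lastIdxOf (s : Sign) (l : List Sign) : ℕ :=
  l.length - 1 - l.reverse.idxOf s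

/-- The crystal operator `ẽ_i`: subtract `c_j` at the position `j` of the
leftmost `-` of the reduced `i`-signature; `none` if there is no `-`. -/
def etilde (m n : ℕ) (i : ℤ) (α : Fin (m + n) → ℤ) : Option (Fin (m + n) → ℤ) :=
  if Sign.minus ∈ redSig m n i α then
    some (fun k => α k - cvec m n ((redSig m n i α).idxOf Sign.minus) k)
  else none

/-- The crystal operator `f̃_i`: add `c_j` at the position `j` of the
rightmost `+` of the reduced `i`-signature; `none` if there is no `+`. -/
def ftilde (m n : ℕ) (i : ℤ) (α : Fin (m + n) → ℤ) : Option (Fin (m + n) → ℤ) :=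
  if Sign.plus ∈ redSig m n i α then
    some (fun k => α k + cvec m n (lastIdxOf Sign.plus (redSig m n i α)) k)
  else none

/-- `α_0(x)`: the number of entries equal to `x` left of the separator. -/
def count0 (m n : ℕ) (α : Fin (m + n) → ℤ) (x : ℤ) : ℕ :=
  (Finset.univ.filter fun j : Fin (m + n) => (j : ℕ) < m ∧ α j = x).card

/-- `α_1(x)`: the number of entries equal to `x` right of the separator. -/
def count1 (m n : ℕ) (α : Fin (m + n) → ℤ) (x : ℤ) : ℕ :=
  (Finset.univ.filter fun j : Fin (m + n) => m ≤ (j : ℕ) ∧ α j = x).card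

/-- `α ∈ ℤ^{m|n}` is antidominant if `a_1 ≤ … ≤ a_m` and `a_{m+1} ≥ … ≥ a_{m+n}`. -/
def Antidominant (m n : ℕ) (α : Fin (m + n) → ℤ) : Prop :=
  (∀ j k : Fin (m + n), (j : ℕ) ≤ (k : ℕ) → (k : ℕ) < m → α j ≤ α k) ∧
  (∀ j k : Fin (m + n), m ≤ (j : ℕ) → (j : ℕ) ≤ (k : ℕ) → α k ≤ α j)

namespace SignAux

abbrev P (a : ℕ) : List Sign := List.replicate a Sign.plus
abbrev M (b : ℕ) : List Sign := List.replicate b Sign.minus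

def strip (l : List Sign) : List Sign := l.filter (fun s => s ≠ Sign.zero)

@[simp] lemma strip_nil : strip [] = [] := rfl
@[simp] lemma strip_zero (l : List Sign) : strip (Sign.zero :: l) = strip l := rfl
@[simp] lemma strip_plus (l : List Sign) : strip (Sign.plus :: l) = Sign.plus :: strip l := rfl
@[simp] lemma strip_minus (l : List Sign) : strip (Sign.minus :: l) = Sign.minus :: strip l := rfl
@[simp] lemma strip_append (l₁ l₂ : List Sign) : strip (l₁ ++ l₂) = strip l₁ ++ strip l₂ :=
  List.filter_append _ _

lemma count_plus_strip (l : List Sign) : (strip l).count Sign.plus = l.count Sign.plus := by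
  induction l with
  | nil => rfl
  | cons s t ih => cases s <;> simp [List.count_cons, ih]

lemma count_minus_strip (l : List Sign) : (strip l).count Sign.minus = l.count Sign.minus := by
  induction l with
  | nil => rfl
  | cons s t ih => cases s <;> simp [List.count_cons, ih]

lemma eatPlus_eq_none : ∀ (l : List Sign), (strip l).head? ≠ some Sign.plus → eatPlus l = none
  | [], _ => rfl
  | Sign.plus :: rest, h => absurd (rfl : (strip (Sign.plus::rest)).head? = some Sign.plus) h
  | Sign.minus :: rest, _ => rfl
  | Sign.zero :: rest, h => by
      have := eatPlus_eq_none rest (by simpa using h)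
      simp [eatPlus, this]

lemma eatPlus_eq_some : ∀ (l : List Sign) (t : List Sign), strip l = Sign.plus :: t →
    ∃ l', eatPlus l = some l' ∧ strip l' = t
  | [], t, h => by simp at h
  | Sign.plus :: rest, t, h => by
      refine ⟨Sign.zero :: rest, rfl, ?_⟩
      simpa using h
  | Sign.minus :: rest, t, h => by simp at h
  | Sign.zero :: rest, t, h => by
      obtain ⟨l', hl', hs⟩ := eatPlus_eq_some rest t (by simpa using h)
      exact ⟨Sign.zero :: l', by simp [eatPlus, hl'], by simpa using hs⟩

end SignAux
namespace SignAux

lemma cancelOne_eq_none : ∀ (l : List Sign) (x y : ℕ), strip l = P x ++ M y → cancelOne l = none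
  | [], _, _, _ => rfl
  | Sign.zero :: rest, x, y, h => by
      have := cancelOne_eq_none rest x y (by simpa using h)
      simp [cancelOne, this]
  | Sign.plus :: rest, x, y, h => by
      match x with
      | 0 => simp [List.replicate] at h; cases y <;> simp [List.replicate_succ] at h
      | x + 1 =>
        have := cancelOne_eq_none rest x y (by simpa [List.replicate_succ] using h)
        simp [cancelOne, this]
  | Sign.minus :: rest, x, y, h => by
      match x, y with
      | 0, 0 => simp [List.replicate] at h
      | x + 1, y => simp [List.replicate_succ] at h
      | 0, y + 1 =>
        have hrest : strip rest = M y := by simpa [List.replicate_succ] using h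
        have hnone : eatPlus rest = none := by
          apply eatPlus_eq_none
          rw [hrest]; cases y <;> simp [List.replicate_succ]
        have := cancelOne_eq_none rest 0 y (by simpa using hrest)
        simp [cancelOne, hnone, this]

def Ok (w : List Sign) : Prop := w.Chain' (fun u v => ¬(u = Sign.minus ∧ v = Sign.plus))

lemma cancelOne_eq_some : ∀ (l : List Sign) (w t : List Sign),
    strip l = w ++ Sign.minus :: Sign.plus :: t → Ok w →
    ∃ l', cancelOne l = some l' ∧ strip l' = w ++ t
  | [], w, t, h, _ => by simp at h
  | Sign.zero :: rest, w, t, h, hw => by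
      obtain ⟨l', hl', hs⟩ := cancelOne_eq_some rest w t (by simpa using h) hw
      exact ⟨Sign.zero :: l', by simp [cancelOne, hl'], by simpa using hs⟩
  | Sign.plus :: rest, w, t, h, hw => by
      match w with
      | [] => simp at h
      | Sign.minus :: w' => simp at h
      | Sign.zero :: w' => simp at h
      | Sign.plus :: w' =>
        obtain ⟨l', hl', hs⟩ := cancelOne_eq_some rest w' t (by simpa using h) (List.IsChain.tail hw)
        exact ⟨Sign.plus :: l', by simp [cancelOne, hl'], by simpa using hs⟩
  | Sign.minus :: rest, w, t, h, hw => by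
      match w with
      | [] =>
        have : strip rest = Sign.plus :: t := by simpa using h
        obtain ⟨r', hr', hs⟩ := eatPlus_eq_some rest t this
        exact ⟨Sign.zero :: r', by simp [cancelOne, hr'], by simpa using hs⟩
      | Sign.plus :: w' => simp at h
      | Sign.zero :: w' => simp at h
      | Sign.minus :: w' =>
        have hrest : strip rest = w' ++ Sign.minus :: Sign.plus :: t := by simpa using h
        have hnone : eatPlus rest = none := by
          apply eatPlus_eq_none
          rw [hrest]
          match w', hw with
          | [], _ => simp
          | Sign.minus :: w'', _ => simp
          | Sign.zero :: w'', _ => simp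
          | Sign.plus :: w'', hw => exact absurd ⟨rfl, rfl⟩ (List.isChain_cons_cons.mp hw).1
        obtain ⟨l', hl', hs⟩ := cancelOne_eq_some rest w' t hrest (List.IsChain.tail hw)
        exact ⟨Sign.minus :: l', by simp [cancelOne, hnone, hl'], by simpa using hs⟩

end SignAux
namespace SignAux

lemma reduceIter_of_none (k : ℕ) (l : List Sign) (h : cancelOne l = none) :
    reduceIter k l = l := by
  cases k <;> simp [reduceIter, h]

lemma counts_of_strip (l : List Sign) (a b c d : ℕ)
    (h : strip l = P a ++ M b ++ P c ++ M d) :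
    l.count Sign.plus = a + c ∧ l.count Sign.minus = b + d := by
  rw [← count_plus_strip, ← count_minus_strip, h]
  simp [List.count_append, List.count_replicate]

lemma ok_M (b : ℕ) : Ok (M b) := by
  unfold Ok
  induction b with
  | zero => exact List.isChain_nil
  | succ b ih =>
    show List.Chain' _ (List.replicate (b + 1) Sign.minus)
    rw [List.replicate_succ]
    cases b with
    | zero => exact List.isChain_singleton _
    | succ b =>
      rw [List.replicate_succ]
      exact List.isChain_cons_cons.mpr ⟨by simp, by rw [← List.replicate_succ]; exact ih⟩

lemma ok_PM (a b : ℕ) : Ok (P a ++ M b) := by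
  unfold Ok
  induction a with
  | zero => exact ok_M b
  | succ a ih =>
    show List.Chain' _ (List.replicate (a + 1) Sign.plus ++ _)
    rw [List.replicate_succ, List.cons_append]
    apply List.isChain_cons.mpr
    refine ⟨?_, ih⟩
    intro y _ hy
    exact absurd hy.1 (by simp)

lemma reduceIter_counts_zero (k : ℕ) (l : List Sign) (a b c d : ℕ)
    (h : strip l = P a ++ M b ++ P c ++ M d) (h0 : min b c = 0) :
    (reduceIter k l).count Sign.plus = a + (c - b) ∧
    (reduceIter k l).count Sign.minus = d + (b - c) := by
  obtain ⟨h1, h2⟩ := counts_of_strip l a b c d h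
  have hnone : cancelOne l = none := by
    rcases Nat.min_eq_zero_iff.mp h0 with hb | hc
    · subst hb
      apply cancelOne_eq_none l (a + c) d
      rw [h]; simp only [P, M]; rw [List.replicate_add]; simp
    · subst hc
      apply cancelOne_eq_none l a (b + d)
      rw [h]; simp only [P, M]; rw [List.replicate_add]; simp
  rw [reduceIter_of_none _ _ hnone]
  omega

lemma reduceIter_counts (k : ℕ) : ∀ (b c : ℕ) (l : List Sign) (a d : ℕ),
    strip l = P a ++ M b ++ P c ++ M d → min b c ≤ k →
    (reduceIter k l).count Sign.plus = a + (c - b) ∧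
    (reduceIter k l).count Sign.minus = d + (b - c) := by
  induction k with
  | zero =>
    intro b c l a d h hk
    exact reduceIter_counts_zero 0 l a b c d h (Nat.le_zero.mp hk)
  | succ k ih =>
    intro b c l a d h hk
    match b, c with
    | 0, c => exact reduceIter_counts_zero _ l a 0 c d h (by simp)
    | b, 0 => exact reduceIter_counts_zero _ l a b 0 d h (by simp)
    | b + 1, c + 1 =>
      have h' : strip l = (P a ++ M b) ++ Sign.minus :: Sign.plus :: (P c ++ M d) := by
        rw [h]
        show _ ++ List.replicate (b + 1) Sign.minus ++ List.replicate (c + 1) Sign.plus ++ _ = _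
        rw [List.replicate_succ' (n := b), List.replicate_succ (n := c)]
        simp
      obtain ⟨l', hl', hs⟩ := cancelOne_eq_some l (P a ++ M b) (P c ++ M d) h' (ok_PM a b)
      have hs' : strip l' = P a ++ M b ++ P c ++ M d := by rw [hs]; simp [List.append_assoc]
      have hred : reduceIter (k + 1) l = reduceIter k l' := by simp [reduceIter, hl']
      rw [hred]
      have := ih b c l' a d hs' (by omega)
      omega

end SignAux
namespace SignAux

def lsign (x v : ℤ) : Sign := if v = x then Sign.plus else if v = x + 1 then Sign.minus else Sign.zero
def rsign (x v : ℤ) : Sign := if v = x + 1 then Sign.plus else if v = x then Sign.minus else Sign.zero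

lemma strip_map_lsign (x : ℤ) (L : List ℤ) (hL : L.Pairwise (· ≤ ·)) :
    strip (L.map (lsign x)) = P (L.count x) ++ M (L.count (x + 1)) := by
  induction L with
  | nil => rfl
  | cons v t ih =>
    rw [List.pairwise_cons] at hL
    obtain ⟨hv, ht⟩ := hL
    by_cases h1 : v = x
    · subst h1
      have h2 : v ≠ v + 1 := by omega
      simp [lsign, List.count_cons, h2, ih ht, List.replicate_succ]
    · by_cases h2 : v = x + 1
      · have hc : t.count x = 0 := by
          apply List.count_eq_zero.mpr
          intro hmem
          have := hv x hmem
          omega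
        simp [lsign, List.count_cons, h1, h2, ih ht, hc, List.replicate_succ]
      · simp [lsign, List.count_cons, h1, h2, ih ht]

lemma strip_map_rsign (x : ℤ) (L : List ℤ) (hL : L.Pairwise (· ≥ ·)) :
    strip (L.map (rsign x)) = P (L.count (x + 1)) ++ M (L.count x) := by
  induction L with
  | nil => rfl
  | cons v t ih =>
    rw [List.pairwise_cons] at hL
    obtain ⟨hv, ht⟩ := hL
    by_cases h1 : v = x + 1
    · subst h1
      have h2 : x + 1 ≠ x := by omega
      simp [rsign, List.count_cons, h2, ih ht, List.replicate_succ]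
    · by_cases h2 : v = x
      · have hc : t.count (x + 1) = 0 := by
          apply List.count_eq_zero.mpr
          intro hmem
          have := hv (x + 1) hmem
          omega
        simp [rsign, List.count_cons, h1, h2, ih ht, hc, List.replicate_succ]
      · simp [rsign, List.count_cons, h1, h2, ih ht]

end SignAux
namespace SignAux

lemma card_eq_count {N : ℕ} (f : Fin N → ℤ) (x : ℤ) :
    (Finset.univ.filter fun i : Fin N => f i = x).card = (List.ofFn f).count x := by
  have := Fin.card_filter_univ_eq_vector_get_eq_count x (List.Vector.ofFn f)
  simpa [List.Vector.get_ofFn, List.Vector.toList_ofFn] using this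

lemma count0_eq (m n : ℕ) (α : Fin (m + n) → ℤ) (x : ℤ) :
    count0 m n α x = (List.ofFn fun i : Fin m => α (Fin.castAdd n i)).count x := by
  rw [← card_eq_count]
  unfold count0
  refine Finset.card_bij' (fun j hj => (⟨(j : ℕ), ((Finset.mem_filter.mp hj).2).1⟩ : Fin m))
    (fun i _ => Fin.castAdd n i) ?_ ?_ ?_ ?_
  · intro a ha
    simp at ha ⊢
    exact ha.2
  · intro a ha
    simp at ha ⊢
    exact ha
  · intro a ha; exact Fin.ext rfl
  · intro a ha; exact Fin.ext rfl

lemma count1_eq (m n : ℕ) (α : Fin (m + n) → ℤ) (x : ℤ) :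
    count1 m n α x = (List.ofFn fun i : Fin n => α (Fin.natAdd m i)).count x := by
  rw [← card_eq_count]
  unfold count1
  refine Finset.card_bij' (fun j hj => (⟨(j : ℕ) - m, by
      have h1 := ((Finset.mem_filter.mp hj).2).1
      have h2 := j.isLt
      omega⟩ : Fin n))
    (fun i _ => Fin.natAdd m i) ?_ ?_ ?_ ?_
  · intro a ha
    simp at ha ⊢
    convert ha.2 using 2
    apply Fin.ext
    simp [Fin.natAdd]
    omega
  · intro a ha
    simp at ha ⊢
    exact ha
  · intro a ha
    apply Fin.ext
    have h1 := ((Finset.mem_filter.mp ha).2).1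
    simp [Fin.natAdd]
    omega
  · intro a ha
    apply Fin.ext
    simp

end SignAux
namespace SignAux

lemma strip_sigList (m n : ℕ) (α : Fin (m + n) → ℤ) (hα : Antidominant m n α) (x : ℤ) :
    strip (sigList m n x α) =
      P (count0 m n α x) ++ M (count0 m n α (x + 1)) ++
        P (count1 m n α (x + 1)) ++ M (count1 m n α x) := by
  set β : Fin m → ℤ := fun i => α (Fin.castAdd n i) with hβ
  set γ : Fin n → ℤ := fun i => α (Fin.natAdd m i) with hγ
  have hL : (List.ofFn fun i : Fin m => signOf m n x α (Fin.castAdd n i))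
      = (List.ofFn β).map (lsign x) := by
    rw [List.map_ofFn]
    congr 1
    funext i
    have hi : ((Fin.castAdd n i : Fin (m + n)) : ℕ) < m := by simp [i.isLt]
    simp [signOf, hi, lsign, Function.comp, hβ]
  have hR : (List.ofFn fun i : Fin n => signOf m n x α (Fin.natAdd m i))
      = (List.ofFn γ).map (rsign x) := by
    rw [List.map_ofFn]
    congr 1
    funext i
    have hi : ¬ ((Fin.natAdd m i : Fin (m + n)) : ℕ) < m := by simp
    simp [signOf, hi, rsign, Function.comp, hγ]
  have hsorted : (List.ofFn β).Pairwise (· ≤ ·) := by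
    apply List.pairwise_ofFn.mpr
    intro i j hij
    exact hα.1 (Fin.castAdd n i) (Fin.castAdd n j) (by simpa using hij.le) (by simp [j.isLt])
  have hsorted' : (List.ofFn γ).Pairwise (· ≥ ·) := by
    apply List.pairwise_ofFn.mpr
    intro i j hij
    exact hα.2 (Fin.natAdd m i) (Fin.natAdd m j) (by simp) (by simpa using hij.le)
  rw [sigList, List.ofFn_add, strip_append]
  change strip (List.ofFn fun i : Fin m => signOf m n x α (Fin.castAdd n i)) ++ _ = _
  rw [hL, hR,
    strip_map_lsign x _ hsorted, strip_map_rsign x _ hsorted',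
    count0_eq, count0_eq, count1_eq, count1_eq]
  simp [List.append_assoc, hβ, hγ]

end SignAux

open SignAux in
theorem epsilon_phi_of_antidominant'
    (m n : ℕ) (hm : 1 ≤ m) (hn : 1 ≤ n) (α : Fin (m + n) → ℤ)
    (hα : Antidominant m n α) (x : ℤ) :
    (phiNum m n x α : ℤ) =
        (count0 m n α x : ℤ) +
          max ((count1 m n α (x + 1) : ℤ) - (count0 m n α (x + 1) : ℤ)) 0 ∧
    (epsilonNum m n x α : ℤ) =
        (count1 m n α x : ℤ) +
          max ((count0 m n α (x + 1) : ℤ) - (count1 m n α (x + 1) : ℤ)) 0 := by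
  set l := sigList m n x α with hl
  set a := count0 m n α x
  set b := count0 m n α (x + 1)
  set c := count1 m n α (x + 1)
  set d := count1 m n α x
  have h := strip_sigList m n α hα x
  rw [← hl] at h
  have hcounts := counts_of_strip l a b c d h
  have hk : min b c ≤ l.length := by
    have h1 : l.count Sign.minus ≤ l.length := List.count_le_length
    omega
  obtain ⟨hp, hmi⟩ := reduceIter_counts l.length b c l a d h hk
  have e1 : phiNum m n x α = a + (c - b) := hp
  have e2 : epsilonNum m n x α = d + (b - c) := hmi
  rw [e1, e2]
  constructor <;> push_cast <;> omega

/-- For antidominant `α` and every `x ∈ ℤ`: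
`φ_x(α) = α_0(x) + max(α_1(x+1) − α_0(x+1), 0)` and
`ε_x(α) = α_1(x) + max(α_0(x+1) − α_1(x+1), 0)`. -/
theorem epsilon_phi_of_antidominant
    (m n : ℕ) (hm : 1 ≤ m) (hn : 1 ≤ n) (α : Fin (m + n) → ℤ)
    (hα : Antidominant m n α) (x : ℤ) :
    (phiNum m n x α : ℤ) =
        (count0 m n α x : ℤ) +
          max ((count1 m n α (x + 1) : ℤ) - (count0 m n α (x + 1) : ℤ)) 0 ∧
    (epsilonNum m n x α : ℤ) =
        (count1 m n α x : ℤ) +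
          max ((count0 m n α (x + 1) : ℤ) - (count1 m n α (x + 1) : ℤ)) 0 :=
  epsilon_phi_of_antidominant' m n hm hn α hα x
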